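/- Let (c_1,…,c_n) and (c'_1,…,c'_n) be two linear dependences among points p_1,…,p_n ∈ ℝ^d (i.e. Σ c_i p_i = 0 and Σ c'_i p_i = 0). Then the vector λ indexed by pairs {i,j} with λ_{ij} = c_i c'_j − c'_i c_j is a linear dependence among the rows of the hyperconnectivity matrix H(p): for every vertex i, Σ_{j<i} λ_{ji}(−p_j) + Σ_{j>i} λ_{ij} p_j = 0. -/

import Mathlib

open Finset

/-- The exterior product of two linear dependences among the points gives a linear
dependence among the rows of the hyperconnectivity matrix: for each vertex `i`,
`Σ_{j<i} λ_{ji}·(-p j) + Σ_{j>i} λ_{ij}·(p j) = 0`, where `λ_{ij} = c_i c'_j - c'_i c_j`. -/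
theorem extprod_is_dependence (n d : ℕ) (p : Fin n → Fin d → ℝ) (c c' : Fin n → ℝ)
    (hc : ∑ i, c i • p i = 0) (hc' : ∑ i, c' i • p i = 0) :
    ∀ i : Fin n,
      (∑ j ∈ univ.filter (fun j => j < i), (c j * c' i - c' j * c i) • (-(p j)))
        + (∑ j ∈ univ.filter (fun j => i < j), (c i * c' j - c' i * c j) • p j) = 0 := by
  intro i
  set f : Fin n → Fin d → ℝ := fun j => (c i * c' j - c' i * c j) • p j with hf
  have h1 : ∀ j, (c j * c' i - c' j * c i) • (-(p j)) = f j := by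
    intro j
    simp only [hf, smul_neg, ← neg_smul]
    ring_nf
  have h2 : (∑ j ∈ univ.filter (fun j => j < i), (c j * c' i - c' j * c i) • (-(p j)))
        + (∑ j ∈ univ.filter (fun j => i < j), (c i * c' j - c' i * c j) • p j)
      = ∑ j, f j := by
    rw [Finset.sum_congr rfl (fun j _ => h1 j)]
    rw [Finset.sum_filter, Finset.sum_filter, ← Finset.sum_add_distrib]
    refine Finset.sum_congr rfl (fun j _ => ?_)
    rcases lt_trichotomy j i with h | h | h
    · simp [h, not_lt_of_gt h, hf]
    · subst h
      simp [hf, sub_self, zero_smul, lt_irrefl]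
      module
    · simp [h, not_lt_of_gt h, hf]
  rw [h2]
  have h3 : ∑ j, f j = c i • (∑ j, c' j • p j) - c' i • (∑ j, c j • p j) := by
    rw [Finset.smul_sum, Finset.smul_sum, ← Finset.sum_sub_distrib]
    refine Finset.sum_congr rfl (fun j _ => ?_)
    simp [hf, sub_smul, mul_smul]
  rw [h3, hc, hc', smul_zero, smul_zero, sub_zero]
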